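/- Let u and v be prefix-incomparable words over an alphabet Σ. Then the language {u,v}* is not bounded: for every finite list of words w₁, …, wₙ over Σ, {u,v}* is not contained in w₁*·w₂*·⋯·wₙ*. -/

import Mathlib

open Computability

/-- The product of Kleene stars of singletons `w₁*·w₂*·⋯·wₙ*`. -/
def prodStars {A : Type*} (ws : List (List A)) : Language A :=
  (ws.map fun w => ({w} : Language A)∗).prod

section aux
variable {A : Type*} (u v : List A)

/-- encode a boolean word as a concatenation of u's and v's -/
def enc (u v : List A) : List Bool → List A
  | [] => []
  | b :: s => (bif b then u else v) ++ enc u v s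

lemma enc_inj (hu : u ≠ []) (hv : v ≠ [])
    (huv : ¬ u <+: v) (hvu : ¬ v <+: u) :
    Function.Injective (enc u v) := by
  intro s t h
  induction s generalizing t with
  | nil =>
    cases t with
    | nil => rfl
    | cons b t =>
      exfalso
      cases b <;> simp [enc] at h
      · exact hv h.1
      · exact hu h.1
  | cons a s ih =>
    cases t with
    | nil =>
      exfalso
      cases a <;> simp [enc] at h
      · exact hv h.1
      · exact hu h.1
    | cons b t =>
      have hab : a = b := by
        by_contra hne
        have h1 : (bif a then u else v) <+: enc u v (a :: s) :=
          ⟨enc u v s, rfl⟩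
        have h2 : (bif b then u else v) <+: enc u v (a :: s) := by
          rw [h]; exact ⟨enc u v t, rfl⟩
        rcases List.prefix_or_prefix_of_prefix h1 h2 with hp | hp <;>
          cases a <;> cases b <;> simp_all [enc]
      subst hab
      simp only [enc, List.append_cancel_left_eq] at h
      rw [ih h]

lemma enc_mem_kstar : ∀ s : List Bool, enc u v s ∈ ({u, v} : Language A)∗ := by
  intro s
  induction s with
  | nil => exact Language.nil_mem_kstar _
  | cons b s ih =>
    rw [Language.mem_kstar] at ih ⊢
    obtain ⟨L, hL, hmem⟩ := ih
    refine ⟨(bif b then u else v) :: L, by simp [enc, hL], ?_⟩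
    intro y hy
    rcases List.mem_cons.mp hy with hy | hy
    · subst hy; cases b
      · exact Set.mem_insert_iff.mpr (Or.inr rfl)
      · exact Set.mem_insert _ _
    · exact hmem y hy

lemma enc_length_le (s : List Bool) :
    (enc u v s).length ≤ s.length * max u.length v.length := by
  induction s with
  | nil => simp [enc]
  | cons b s ih =>
    simp only [enc, List.length_append, List.length_cons, Nat.succ_mul]
    have : (bif b then u else v).length ≤ max u.length v.length := by
      cases b <;> simp
    omega

/-- a product of powers -/
def pw : List (List A) → List ℕ → List A
  | [], _ => []
  | _ :: _, [] => []
  | w :: ws, k :: ks => (List.replicate k w).flatten ++ pw ws ks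

lemma mem_prodStars {x : List A} :
    ∀ ws : List (List A), x ∈ prodStars ws →
    ∃ ks : List ℕ, ks.length = ws.length ∧ (∀ k ∈ ks, k ≤ x.length) ∧ x = pw ws ks := by
  intro ws
  induction ws generalizing x with
  | nil =>
    intro hx
    refine ⟨[], rfl, by simp, ?_⟩
    simp [prodStars, Language.one_def] at hx; exact hx
  | cons w ws ih =>
    intro hx
    have hx' : x ∈ ({w} : Language A)∗ * prodStars ws := by
      simpa [prodStars] using hx
    rw [Language.mem_mul] at hx'
    obtain ⟨a, ha, b, hb, hab⟩ := hx'
    rw [Language.mem_kstar] at ha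
    obtain ⟨L, hL, hLmem⟩ := ha
    have hLrep : L = List.replicate L.length w :=
      List.eq_replicate_iff.mpr ⟨rfl, hLmem⟩
    obtain ⟨ks, hlen, hbound, hpw⟩ := ih hb
    by_cases hw : w = []
    · refine ⟨0 :: ks, by simp [hlen], ?_, ?_⟩
      · intro k hk
        rcases List.mem_cons.mp hk with hk | hk
        · omega
        · have := hbound k hk
          have : b.length ≤ x.length := by subst hab; simp
          omega
      · have ha0 : a = [] := by
          subst hw; rw [hL, hLrep]; simp
        simp [pw, ← hpw, ← hab, ha0]
    · refine ⟨L.length :: ks, by simp [hlen], ?_, ?_⟩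
      · intro k hk
        rcases List.mem_cons.mp hk with hk | hk
        · have h1 : a.length = L.length * w.length := by
            rw [hL, hLrep]; simp [Nat.mul_comm]
          have h2 : 1 ≤ w.length := List.length_pos_iff.mpr hw
          have h3 : a.length ≤ x.length := by subst hab; simp
          calc k = L.length := hk
            _ ≤ L.length * w.length := Nat.le_mul_of_pos_right _ h2
            _ ≤ x.length := by omega
        · have := hbound k hk
          have : b.length ≤ x.length := by subst hab; simp
          omega
      · simp [pw, ← hpw, ← hab, ← hL, hLrep.symm]

end aux

lemma exists_big (m n : ℕ) : ∃ K, 0 < K ∧ (K * m + 1) ^ n < 2 ^ K := by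
  have h := isLittleO_pow_const_const_pow_of_one_lt (R := ℝ) n
    (r := 2) (by norm_num)
  have hc : (0:ℝ) < 1 / (2 * ((m:ℝ)+1)^n) := by positivity
  obtain ⟨K0, hK0⟩ := Filter.eventually_atTop.mp (h.def hc)
  set K := max K0 1 with hKdef
  have hK1 : 1 ≤ K := le_max_right _ _
  have hb := hK0 K (le_max_left _ _)
  simp only [Real.norm_eq_abs] at hb
  rw [abs_of_nonneg (by positivity), abs_of_nonneg (by positivity)] at hb
  have key : (((K * m + 1 : ℕ)) : ℝ) ^ n < 2 ^ K := by
    have h1 : (((K * m + 1 : ℕ)) : ℝ) ≤ ((m:ℝ)+1) * K := by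
      push_cast
      have hK1' : (1:ℝ) ≤ K := by exact_mod_cast hK1
      nlinarith
    have h2pos : (0:ℝ) < 2 ^ K := by positivity
    calc (((K * m + 1 : ℕ)) : ℝ) ^ n ≤ (((m:ℝ)+1) * K) ^ n := by
          exact pow_le_pow_left₀ (by positivity) h1 n
      _ = ((m:ℝ)+1)^n * (K:ℝ)^n := mul_pow _ _ n
      _ ≤ ((m:ℝ)+1)^n * (1/(2*((m:ℝ)+1)^n) * 2^K) :=
          mul_le_mul_of_nonneg_left hb (by positivity)
      _ = 2^K / 2 := by field_simp
      _ < 2^K := by linarith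
  refine ⟨K, by omega, ?_⟩
  exact_mod_cast key


/-- The star of two prefix-incomparable words is not a bounded language. -/
theorem kstar_two_words_not_bounded {A : Type*} (u v : List A)
    (huv : ¬ u <+: v) (hvu : ¬ v <+: u) :
    ∀ ws : List (List A), ¬ (({u, v} : Language A)∗ ≤ prodStars ws) := by
  intro ws h
  have hu : u ≠ [] := fun h' => huv (h' ▸ List.nil_prefix)
  have hv : v ≠ [] := fun h' => hvu (h' ▸ List.nil_prefix)
  set m := max u.length v.length with hmdef
  set n := ws.length with hndef
  obtain ⟨K, hKpos, hbig⟩ := exists_big m n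
  have hex : ∀ s : Fin K → Bool, ∃ ks : List ℕ, ks.length = n ∧ (∀ k ∈ ks, k ≤ K * m) ∧
      enc u v (List.ofFn s) = pw ws ks := by
    intro s
    have hmem := h (enc_mem_kstar u v (List.ofFn s))
    obtain ⟨ks, h1, h2, h3⟩ := mem_prodStars ws hmem
    refine ⟨ks, h1, ?_, h3⟩
    intro k hk
    have hkk := h2 k hk
    have hlen := enc_length_le u v (List.ofFn s)
    simp only [List.length_ofFn] at hlen
    rw [hmdef]
    exact hkk.trans hlen
  choose ks hlen hbound hpw using hex
  have hψ : Function.Injective (fun (s : Fin K → Bool) (i : Fin n) =>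
      (⟨(ks s)[(i : ℕ)]'(by rw [hlen s]; exact i.isLt),
        Nat.lt_succ_of_le (hbound s _ (List.getElem_mem _))⟩ : Fin (K*m+1))) := by
    intro s t hst
    have hks : ks s = ks t := by
      apply List.ext_getElem (by rw [hlen s, hlen t])
      intro i h1 h2
      have := congrFun hst ⟨i, by rw [← hlen s]; exact h1⟩
      exact congrArg Fin.val this
    have henc : enc u v (List.ofFn s) = enc u v (List.ofFn t) := by
      rw [hpw s, hpw t, hks]
    exact List.ofFn_inj.mp (enc_inj u v hu hv huv hvu henc)
  have hcard := Fintype.card_le_of_injective _ hψ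
  simp only [Fintype.card_fun, Fintype.card_fin, Fintype.card_bool] at hcard
  exact absurd hcard (not_le.mpr hbig)
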